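/- Let M be an indecomposable well-order and let n be a natural number. Suppose L_0, …, L_{n−1} are linear orders such that for each i < n there is an order embedding of L_i into M but no order embedding of M into L_i. Then the linear order (Σ_{i<n} L_i) + M (the lexicographic sum of the L_i followed by M) is order isomorphic to M (equivalently, each of the two orders embeds into the other). -/

import Mathlib

/-- A well-order `M` is *indecomposable* if for every `m : M`, `M` order-embeds into the
final segment `{x : M // m ≤ x}`. -/
def Indecomposable (M : Type*) [LinearOrder M] : Prop :=
  ∀ m : M, Nonempty (M ↪o {x : M // m ≤ x})


open Sum Ordinal

section helpers

variable {α β γ δ : Type*}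

def sumLexCongrIso [Preorder α] [Preorder β] [Preorder γ] [Preorder δ]
    (e₁ : α ≃o β) (e₂ : γ ≃o δ) : (α ⊕ₗ γ) ≃o (β ⊕ₗ δ) where
  toFun x := toLex (Sum.map e₁ e₂ (ofLex x))
  invFun y := toLex (Sum.map e₁.symm e₂.symm (ofLex y))
  left_inv x := by
    rcases x with a | a
    · exact congrArg (fun z => toLex (Sum.inl z)) (e₁.symm_apply_apply a)
    · exact congrArg (fun z => toLex (Sum.inr z)) (e₂.symm_apply_apply a)
  right_inv y := by
    rcases y with a | a
    · exact congrArg (fun z => toLex (Sum.inl z)) (e₁.apply_symm_apply a)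
    · exact congrArg (fun z => toLex (Sum.inr z)) (e₂.apply_symm_apply a)
  map_rel_iff' {a b} := by
    rcases a with a | a <;> rcases b with b | b
    · exact Sum.Lex.inl_le_inl_iff.trans (e₁.le_iff_le.trans Sum.Lex.inl_le_inl_iff.symm)
    · exact iff_of_true (Sum.Lex.inl_le_inr _ _) (Sum.Lex.inl_le_inr _ _)
    · exact iff_of_false Sum.Lex.not_inr_le_inl Sum.Lex.not_inr_le_inl
    · exact Sum.Lex.inr_le_inr_iff.trans (e₂.le_iff_le.trans Sum.Lex.inr_le_inr_iff.symm)

def sumLexEmptyIso [Preorder α] [Preorder β] [IsEmpty α] : (α ⊕ₗ β) ≃o β where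
  toFun x := Sum.elim (fun a => isEmptyElim a) id (ofLex x)
  invFun y := toLex (Sum.inr y)
  left_inv x := by
    rcases x with a | a
    · exact isEmptyElim a
    · rfl
  right_inv y := rfl
  map_rel_iff' {a b} := by
    rcases a with a | a
    · exact isEmptyElim a
    rcases b with b | b
    · exact isEmptyElim b
    exact Sum.Lex.inr_le_inr_iff.symm

end helpers

theorem lemA {L : Type v} {M : Type u} [LinearOrder L] [LinearOrder M] [WellFoundedLT M]
    (hM : Indecomposable M) (hemb : Nonempty (L ↪o M)) (hnemb : ¬ Nonempty (M ↪o L)) :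
    Nonempty ((L ⊕ₗ M) ≃o M) := by
  obtain ⟨f⟩ := hemb
  haveI : WellFoundedLT L := f.wellFoundedLT
  -- L embeds as a principal segment of M
  have hle : Ordinal.lift.{max u v} (Ordinal.type ((· < ·) : L → L → Prop)) ≤
      Ordinal.lift.{max u v} (Ordinal.type ((· < ·) : M → M → Prop)) :=
    Ordinal.lift_type_le.{v,u,max u v}.2 ⟨f.ltEmbedding.collapse⟩
  have hlt : Ordinal.lift.{max u v} (Ordinal.type ((· < ·) : L → L → Prop)) <
      Ordinal.lift.{max u v} (Ordinal.type ((· < ·) : M → M → Prop)) := by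
    refine lt_of_le_of_ne hle fun h => hnemb ?_
    obtain ⟨e⟩ := Ordinal.lift_type_eq.{v,u,max u v}.1 h
    exact ⟨OrderEmbedding.ofStrictMono e.symm (fun a b hab => e.symm.map_rel_iff.2 hab)⟩
  obtain ⟨ps⟩ := Ordinal.lift_type_lt.{v,u,max u v}.1 hlt
  set t : M := ps.top with ht
  obtain ⟨g⟩ := hM t
  -- embedding of L ⊕ₗ M into M
  let F : Sum.Lex ((· < ·) : L → L → Prop) ((· < ·) : M → M → Prop) ↪r
      ((· < ·) : M → M → Prop) :=
    RelEmbedding.ofMonotone (Sum.elim (fun a => ps a) (fun b => (g b : M))) (by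
      rintro (a | a) (b | b) h
      · exact ps.map_rel_iff.2 (by cases h; assumption)
      · exact lt_of_lt_of_le (ps.lt_top a) (g b).2
      · exact absurd h (by intro h; cases h)
      · exact g.lt_iff_lt.2 (by cases h; assumption))
  let G : ((· < ·) : M → M → Prop) ↪r
      Sum.Lex ((· < ·) : L → L → Prop) ((· < ·) : M → M → Prop) :=
    RelEmbedding.ofMonotone Sum.inr (fun a b h => Sum.Lex.inr h)
  have h1 := Ordinal.lift_type_le.{max u v,u,max u v}.2 ⟨F.collapse⟩
  have h2 := Ordinal.lift_type_le.{u,max u v,max u v}.2 ⟨G.collapse⟩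
  obtain ⟨e⟩ := Ordinal.lift_type_eq.{max u v,u,max u v}.1 (le_antisymm h1 h2)
  exact ⟨OrderIso.ofRelIsoLT e⟩

def sigmaSuccIso (n : ℕ) (L : Fin (n + 1) → Type*) [∀ i, LinearOrder (L i)] :
    (Σₗ i, L i) ≃o (L 0 ⊕ₗ Σₗ i : Fin n, L i.succ) where
  toFun x := toLex (Fin.cases (motive := fun i => L i → (L 0 ⊕ (Σ j : Fin n, L j.succ)))
    (fun a => Sum.inl a) (fun j a => Sum.inr ⟨j, a⟩) (ofLex x).1 (ofLex x).2)
  invFun y := toLex (Sum.elim (fun a => (⟨0, a⟩ : Σ i, L i))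
    (fun p => ⟨(ofLex p).1.succ, (ofLex p).2⟩) (ofLex y))
  left_inv x := by
    obtain ⟨i, a⟩ := x
    induction i using Fin.cases with
    | zero => rfl
    | succ j => rfl
  right_inv y := by
    rcases y with a | p
    · rfl
    · obtain ⟨j, a⟩ := p
      rfl
  map_rel_iff' {x y} := by
    obtain ⟨i, a⟩ := x
    obtain ⟨j, b⟩ := y
    induction i using Fin.cases with
    | zero =>
      induction j using Fin.cases with
      | zero =>
        change toLex (Sum.inl a) ≤ toLex (Sum.inl b) ↔ _
        rw [Sum.Lex.inl_le_inl_iff]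
        change a ≤ b ↔ toLex (⟨0, a⟩ : Σ i, L i) ≤ toLex ⟨0, b⟩
        rw [Sigma.Lex.le_def]
        constructor
        · intro h
          exact Or.inr ⟨rfl, h⟩
        · rintro (h | ⟨_, h⟩)
          · exact absurd h (lt_irrefl _)
          · exact h
      | succ q =>
        change toLex (Sum.inl a) ≤ toLex (Sum.inr (toLex (⟨q, b⟩ : Σ j : Fin n, L j.succ))) ↔ _
        refine iff_of_true (Sum.Lex.inl_le_inr _ _) (Sigma.Lex.le_def.2 (Or.inl ?_))
        exact Fin.succ_pos q
    | succ p =>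
      induction j using Fin.cases with
      | zero =>
        change toLex (Sum.inr (toLex (⟨p, a⟩ : Σ j : Fin n, L j.succ))) ≤ toLex (Sum.inl b) ↔ _
        refine iff_of_false Sum.Lex.not_inr_le_inl fun h => ?_
        rcases Sigma.Lex.le_def.1 h with h | ⟨heq, -⟩
        · exact absurd h (Fin.not_lt_zero _)
        · exact Fin.succ_ne_zero p heq
      | succ q =>
        change toLex (Sum.inr (toLex (⟨p, a⟩ : Σ j : Fin n, L j.succ))) ≤ toLex (Sum.inr (toLex (⟨q, b⟩ : Σ j : Fin n, L j.succ))) ↔ _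
        rw [Sum.Lex.inr_le_inr_iff]
        constructor
        · intro h
          rcases Sigma.Lex.le_def.1 h with h | ⟨heq, hle⟩
          · exact Sigma.Lex.le_def.2 (Or.inl (by simpa using (show p < q from h)))
          · obtain rfl : p = q := heq
            exact Sigma.Lex.le_def.2 (Or.inr ⟨rfl, hle⟩)
        · intro h
          rcases Sigma.Lex.le_def.1 h with h | ⟨heq, hle⟩
          · exact Sigma.Lex.le_def.2 (Or.inl (show p < q by simpa using h))
          · obtain rfl : p = q := Fin.succ_inj.1 heq
            exact Sigma.Lex.le_def.2 (Or.inr ⟨rfl, hle⟩)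

theorem auxMain {M : Type u} [LinearOrder M] [WellFoundedLT M] (hM : Indecomposable M) :
    ∀ (n : ℕ) (L : Fin n → Type v) [∀ i, LinearOrder (L i)],
      (∀ i, Nonempty (L i ↪o M)) → (∀ i, ¬ Nonempty (M ↪o L i)) →
      Nonempty (((Σₗ i, L i) ⊕ₗ M) ≃o M) := by
  intro n
  induction n with
  | zero =>
    intro L _ hemb hnemb
    haveI : IsEmpty (Σₗ i : Fin 0, L i) := ⟨fun x => (ofLex x).1.elim0⟩
    exact ⟨sumLexEmptyIso⟩
  | succ n ih =>
    intro L _ hemb hnemb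
    obtain ⟨e1⟩ := ih (fun i : Fin n => L i.succ) (fun i => hemb i.succ) (fun i => hnemb i.succ)
    obtain ⟨e2⟩ := lemA hM (hemb 0) (hnemb 0)
    exact ⟨(((sumLexCongrIso (sigmaSuccIso n L) (OrderIso.refl M)).trans
      (OrderIso.sumLexAssoc _ _ _)).trans
      (sumLexCongrIso (OrderIso.refl (L 0)) e1)).trans e2⟩


/-- If `M` is an indecomposable well-order and `L₀, …, L_{n-1}` are linear orders each of
which embeds into `M` while `M` embeds into none of them, then `(Σ_{i<n} L i) + M` is
order isomorphic to `M`. -/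
theorem statement0 {M : Type*} [LinearOrder M] [WellFoundedLT M]
    (hM : Indecomposable M) (n : ℕ) (L : Fin n → Type*) [∀ i, LinearOrder (L i)]
    (hemb : ∀ i, Nonempty (L i ↪o M)) (hnemb : ∀ i, ¬ Nonempty (M ↪o L i)) :
    Nonempty (((Σₗ i, L i) ⊕ₗ M) ≃o M) := by
  exact auxMain hM n L hemb hnemb
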